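/- Let a,b,c,d ∈ ℚ with ad − bc ≠ 0, and let (x,y,z) ∈ ℚ³ with (x,z) ≠ (0,0) satisfy y² = (a(z² − x²) + 2bxz)² + (c(z² − x²) + 2dxz)². Set u₁ = −c(z² − x²) − 2dxz, v₁ = a(z² − x²) + 2bxz, u₂ = z² − x², v₂ = 2xz. Then (u₁,v₁) ≠ (0,0), (u₂,v₂) ≠ (0,0), a·u₁·u₂ + b·u₁·v₂ + c·v₁·u₂ + d·v₁·v₂ = 0, and there exist w₁, w₂ ∈ ℚ with u₁² + v₁² = w₁² and u₂² + v₂² = w₂². -/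
import Mathlib


theorem stmt_12 (a b c d : ℚ) (hdet : a * d - b * c ≠ 0)
    (x y z : ℚ) (hxz : (x, z) ≠ (0, 0))
    (heq : y ^ 2 = (a * (z ^ 2 - x ^ 2) + 2 * b * x * z) ^ 2 +
      (c * (z ^ 2 - x ^ 2) + 2 * d * x * z) ^ 2)
    (u₁ v₁ u₂ v₂ : ℚ)
    (hu₁ : u₁ = -c * (z ^ 2 - x ^ 2) - 2 * d * x * z)
    (hv₁ : v₁ = a * (z ^ 2 - x ^ 2) + 2 * b * x * z)
    (hu₂ : u₂ = z ^ 2 - x ^ 2) (hv₂ : v₂ = 2 * x * z) :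
    (u₁, v₁) ≠ (0, 0) ∧ (u₂, v₂) ≠ (0, 0) ∧
      a * u₁ * u₂ + b * u₁ * v₂ + c * v₁ * u₂ + d * v₁ * v₂ = 0 ∧
      (∃ w₁ : ℚ, u₁ ^ 2 + v₁ ^ 2 = w₁ ^ 2) ∧ (∃ w₂ : ℚ, u₂ ^ 2 + v₂ ^ 2 = w₂ ^ 2) := by
  have hxz' : x ≠ 0 ∨ z ≠ 0 := by
    by_contra h
    push_neg at h
    exact hxz (by simp [h.1, h.2])
  have h2 : (u₂, v₂) ≠ (0, 0) := by
    intro h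
    have h1 : u₂ = 0 := (Prod.mk.injEq _ _ _ _ ▸ h).1
    have h2 : v₂ = 0 := (Prod.mk.injEq _ _ _ _ ▸ h).2
    rw [hu₂] at h1; rw [hv₂] at h2
    have hx : x = 0 ∧ z = 0 := by
      rcases mul_eq_zero.mp (by nlinarith : x * z = 0) with h | h <;>
        constructor <;> nlinarith
    exact hxz (by simp [hx.1, hx.2])
  refine ⟨?_, h2, by rw [hu₁, hv₁, hu₂, hv₂]; ring, ⟨y, by rw [hu₁, hv₁]; nlinarith⟩,
    ⟨x ^ 2 + z ^ 2, by rw [hu₂, hv₂]; ring⟩⟩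
  intro h
  have h1 : c * u₂ + d * v₂ = 0 := by
    have := (Prod.mk.injEq _ _ _ _ ▸ h).1
    rw [hu₁] at this; rw [hu₂, hv₂]; linarith
  have h3 : a * u₂ + b * v₂ = 0 := by
    have := (Prod.mk.injEq _ _ _ _ ▸ h).2
    rw [hv₁] at this; rw [hu₂, hv₂]; linarith
  have hu : u₂ = 0 := by
    have : (a * d - b * c) * u₂ = 0 := by linear_combination d * h3 - b * h1
    exact (mul_eq_zero.mp this).resolve_left hdet
  have hv : v₂ = 0 := by
    have : (a * d - b * c) * v₂ = 0 := by linear_combination a * h1 - c * h3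
    exact (mul_eq_zero.mp this).resolve_left hdet
  exact h2 (by simp [hu, hv])
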